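/- Let A be an entrywise nonnegative n×n matrix. Then the function α ↦ r(S_α(A)), where r is the spectral radius and S_α(A)_{ij} = a_{ij}^α a_{ji}^{1−α}, is decreasing on [0, 1/2] and increasing on [1/2, 1]; in particular r(S_α(A)) ≥ r(S(A)) for all α ∈ [0,1], where S(A) = S_{1/2}(A). -/

import Mathlib

/-- The spectral radius of a real `n × n` matrix (largest modulus of a complex eigenvalue). -/
noncomputable def specRad {n : ℕ} (A : Matrix (Fin n) (Fin n) ℝ) : ℝ :=
  (spectralRadius ℂ (A.map (Complex.ofReal))).toReal

/-- The weighted geometric symmetrization `S_α(A)` with entries `a_{ij}^α a_{ji}^{1-α}`. -/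
noncomputable def wgs {n : ℕ} (α : ℝ) (A : Matrix (Fin n) (Fin n) ℝ) :
    Matrix (Fin n) (Fin n) ℝ :=
  Matrix.of fun i j => A i j ^ α * A j i ^ (1 - α)

namespace SpecRadAux

open Filter Topology
open scoped ENNReal NNReal Matrix

attribute [local instance] Matrix.frobeniusSeminormedAddCommGroup
  Matrix.frobeniusNormedAddCommGroup Matrix.frobeniusNormedSpace
  Matrix.frobeniusNormedRing Matrix.frobeniusNormedAlgebra

variable {n : ℕ}

local instance : CompleteSpace (Matrix (Fin n) (Fin n) ℂ) :=
  inferInstanceAs (CompleteSpace (Fin n → Fin n → ℂ))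

/-- Frobenius norm of the complexification of a real matrix. -/
noncomputable def fn (M : Matrix (Fin n) (Fin n) ℝ) : ℝ := ‖M.map (Complex.ofReal)‖

lemma fn_def (M : Matrix (Fin n) (Fin n) ℝ) :
    fn M = (∑ i, ∑ j, |M i j| ^ (2 : ℝ)) ^ (1 / 2 : ℝ) := by
  rw [fn, Matrix.frobenius_norm_def]
  simp [Complex.norm_real, Real.norm_eq_abs, Matrix.map_apply]

lemma fn_nonneg (M : Matrix (Fin n) (Fin n) ℝ) : 0 ≤ fn M := norm_nonneg _

lemma specRad_nonneg (M : Matrix (Fin n) (Fin n) ℝ) : 0 ≤ specRad M :=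
  ENNReal.toReal_nonneg

/-- Gelfand's formula, real form, Frobenius norm. -/
lemma tendsto_fn_pow (M : Matrix (Fin n) (Fin n) ℝ) :
    Tendsto (fun k : ℕ => fn (M ^ k) ^ (1 / (k : ℝ))) atTop (𝓝 (specRad M)) := by
  have hmap : ∀ k : ℕ, (M ^ k).map (Complex.ofReal) =
      (M.map (Complex.ofReal)) ^ k := by
    intro k
    have := map_pow (Complex.ofRealHom.mapMatrix (m := Fin n)) M k
    have h2 : ∀ N : Matrix (Fin n) (Fin n) ℝ,
        Complex.ofRealHom.mapMatrix N = N.map Complex.ofReal := by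
      intro N; ext i j; simp [RingHom.mapMatrix_apply, Matrix.map_apply]
    rw [h2, h2] at this
    exact this
  set a : Matrix (Fin n) (Fin n) ℂ := M.map (Complex.ofReal) with ha
  have hfin : spectralRadius ℂ a ≠ ⊤ := by
    refine ne_top_of_le_ne_top ?_ (spectrum.spectralRadius_le_pow_nnnorm_pow_one_div ℂ a 0)
    exact ENNReal.mul_ne_top
      (ENNReal.rpow_ne_top_of_nonneg (by norm_num) ENNReal.coe_ne_top)
      (ENNReal.rpow_ne_top_of_nonneg (by norm_num) ENNReal.coe_ne_top)
  have h := spectrum.pow_nnnorm_pow_one_div_tendsto_nhds_spectralRadius a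
  have h2 := (ENNReal.tendsto_toReal hfin).comp h
  have he : ∀ k : ℕ,
      (((‖a ^ k‖₊ : ℝ≥0∞) ^ (1 / (k : ℝ))).toReal) = fn (M ^ k) ^ (1 / (k : ℝ)) := by
    intro k
    rw [← ENNReal.coe_rpow_of_nonneg _ (one_div_nonneg.mpr (Nat.cast_nonneg k)),
      ENNReal.coe_toReal, NNReal.coe_rpow, coe_nnnorm]
    congr 1
    rw [fn, hmap]
  have : specRad M = (spectralRadius ℂ a).toReal := rfl
  rw [this]
  exact h2.congr he

lemma fn_le_fn {P Q : Matrix (Fin n) (Fin n) ℝ} (h0 : ∀ i j, 0 ≤ P i j)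
    (h : ∀ i j, P i j ≤ Q i j) : fn P ≤ fn Q := by
  rw [fn_def, fn_def]
  have hQ0 : ∀ i j, 0 ≤ Q i j := fun i j => (h0 i j).trans (h i j)
  apply Real.rpow_le_rpow (by positivity) ?_ (by norm_num)
  refine Finset.sum_le_sum fun i _ => Finset.sum_le_sum fun j _ => ?_
  apply Real.rpow_le_rpow (abs_nonneg _) ?_ (by norm_num)
  rw [abs_of_nonneg (h0 i j), abs_of_nonneg (hQ0 i j)]
  exact h i j

lemma pow_entry_nonneg {M : Matrix (Fin n) (Fin n) ℝ} (hM : ∀ i j, 0 ≤ M i j) (k : ℕ) :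
    ∀ i j, 0 ≤ (M ^ k) i j := by
  induction k with
  | zero =>
    intro i j
    by_cases hij : i = j <;> simp [pow_zero, Matrix.one_apply, hij]
  | succ k ih =>
    intro i j
    rw [pow_succ', Matrix.mul_apply]
    exact Finset.sum_nonneg fun s _ => mul_nonneg (hM i s) (ih s j)

/-- Hölder's inequality in the geometric-mean form. -/
lemma holder {ι : Type*} (s : Finset ι) (x y : ι → ℝ) (hx : ∀ i, 0 ≤ x i)
    (hy : ∀ i, 0 ≤ y i) {t : ℝ} (ht0 : 0 < t) (ht1 : t < 1) :
    ∑ i ∈ s, x i ^ t * y i ^ (1 - t) ≤ (∑ i ∈ s, x i) ^ t * (∑ i ∈ s, y i) ^ (1 - t) := by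
  have h1t : 0 < 1 - t := by linarith
  have hpq : Real.HolderConjugate (1 / t) (1 / (1 - t)) := by
    rw [Real.holderConjugate_iff]
    constructor
    · rw [lt_div_iff₀ ht0]; linarith
    · rw [one_div, inv_inv, one_div, inv_inv]; ring
  have hkeyx : ∀ i, |x i ^ t| ^ (1 / t) = x i := by
    intro i
    rw [abs_of_nonneg (Real.rpow_nonneg (hx i) t), ← Real.rpow_mul (hx i),
      mul_one_div, div_self ht0.ne', Real.rpow_one]
  have hkeyy : ∀ i, |y i ^ (1 - t)| ^ (1 / (1 - t)) = y i := by
    intro i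
    rw [abs_of_nonneg (Real.rpow_nonneg (hy i) _), ← Real.rpow_mul (hy i),
      mul_one_div, div_self h1t.ne', Real.rpow_one]
  have := Real.inner_le_Lp_mul_Lq s (fun i => x i ^ t) (fun i => y i ^ (1 - t)) hpq
  simp only [hkeyx, hkeyy, one_div_one_div] at this
  exact this

lemma pow_entry_le {A B : Matrix (Fin n) (Fin n) ℝ} (hA : ∀ i j, 0 ≤ A i j)
    (hB : ∀ i j, 0 ≤ B i j) {t : ℝ} (ht0 : 0 < t) (ht1 : t < 1) (k : ℕ) :
    ∀ i j, ((Matrix.of fun i j => A i j ^ t * B i j ^ (1 - t)) ^ k) i j ≤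
      ((A ^ k) i j) ^ t * ((B ^ k) i j) ^ (1 - t) := by
  have h1t : 0 < 1 - t := by linarith
  set C : Matrix (Fin n) (Fin n) ℝ := Matrix.of fun i j => A i j ^ t * B i j ^ (1 - t) with hC
  have hCn : ∀ i j, 0 ≤ C i j := fun i j =>
    mul_nonneg (Real.rpow_nonneg (hA i j) t) (Real.rpow_nonneg (hB i j) _)
  induction k with
  | zero =>
    intro i j
    by_cases hij : i = j
    · simp [pow_zero, Matrix.one_apply, hij]
    · simp only [pow_zero, Matrix.one_apply, hij, if_false]
      positivity
  | succ k ih =>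
    intro i j
    rw [pow_succ', Matrix.mul_apply]
    calc ∑ s, C i s * (C ^ k) s j
        ≤ ∑ s, (A i s * (A ^ k) s j) ^ t * (B i s * (B ^ k) s j) ^ (1 - t) := by
          refine Finset.sum_le_sum fun s _ => ?_
          have h1 : C i s * (C ^ k) s j ≤
              C i s * (((A ^ k) s j) ^ t * ((B ^ k) s j) ^ (1 - t)) :=
            mul_le_mul_of_nonneg_left (ih s j) (hCn i s)
          refine h1.trans_eq ?_
          have : C i s = A i s ^ t * B i s ^ (1 - t) := rfl
          rw [this, Real.mul_rpow (hA i s) (pow_entry_nonneg hA k s j),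
            Real.mul_rpow (hB i s) (pow_entry_nonneg hB k s j)]
          ring
      _ ≤ (∑ s, A i s * (A ^ k) s j) ^ t * (∑ s, B i s * (B ^ k) s j) ^ (1 - t) := by
          refine holder _ _ _ (fun s => mul_nonneg (hA i s) (pow_entry_nonneg hA k s j))
            (fun s => mul_nonneg (hB i s) (pow_entry_nonneg hB k s j)) ht0 ht1
      _ = ((A ^ (k + 1)) i j) ^ t * ((B ^ (k + 1)) i j) ^ (1 - t) := by
          rw [pow_succ', pow_succ', Matrix.mul_apply, Matrix.mul_apply]

lemma rpow_geom_comm {X Y : ℝ} (hX : 0 ≤ X) (hY : 0 ≤ Y) (t r : ℝ) :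
    (X ^ t * Y ^ (1 - t)) ^ r = (X ^ r) ^ t * (Y ^ r) ^ (1 - t) := by
  rw [Real.mul_rpow (Real.rpow_nonneg hX t) (Real.rpow_nonneg hY _), ← Real.rpow_mul hX,
    ← Real.rpow_mul hY, mul_comm t r, mul_comm (1 - t) r, Real.rpow_mul hX, Real.rpow_mul hY]

lemma fn_sq (M : Matrix (Fin n) (Fin n) ℝ) (hM : ∀ i j, 0 ≤ M i j) :
    fn M = (∑ p : Fin n × Fin n, (M p.1 p.2) ^ (2 : ℝ)) ^ (1 / 2 : ℝ) := by
  rw [fn_def, Fintype.sum_prod_type]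
  congr 1
  exact Finset.sum_congr rfl fun i _ => Finset.sum_congr rfl fun j _ => by
    rw [abs_of_nonneg (hM i j)]

set_option maxHeartbeats 1000000 in
lemma fn_holder {P Q : Matrix (Fin n) (Fin n) ℝ} (hP : ∀ i j, 0 ≤ P i j)
    (hQ : ∀ i j, 0 ≤ Q i j) {t : ℝ} (ht0 : 0 < t) (ht1 : t < 1) :
    fn (Matrix.of fun i j => P i j ^ t * Q i j ^ (1 - t)) ≤ fn P ^ t * fn Q ^ (1 - t) := by
  have h1t : 0 < 1 - t := by linarith
  have hD : ∀ i j, 0 ≤ (Matrix.of fun i j => P i j ^ t * Q i j ^ (1 - t)) i j := fun i j =>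
    mul_nonneg (Real.rpow_nonneg (hP i j) t) (Real.rpow_nonneg (hQ i j) _)
  rw [fn_sq _ hD, fn_sq P hP, fn_sq Q hQ]
  set X : ℝ := ∑ p : Fin n × Fin n, (P p.1 p.2) ^ (2 : ℝ) with hX
  set Y : ℝ := ∑ p : Fin n × Fin n, (Q p.1 p.2) ^ (2 : ℝ) with hY
  have hX0 : 0 ≤ X := Finset.sum_nonneg fun p _ => Real.rpow_nonneg (hP p.1 p.2) 2
  have hY0 : 0 ≤ Y := Finset.sum_nonneg fun p _ => Real.rpow_nonneg (hQ p.1 p.2) 2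
  have step1 : (∑ p : Fin n × Fin n,
      ((Matrix.of fun i j => P i j ^ t * Q i j ^ (1 - t)) p.1 p.2) ^ (2 : ℝ)) ≤
      X ^ t * Y ^ (1 - t) := by
    have he : ∀ p : Fin n × Fin n,
        ((Matrix.of fun i j => P i j ^ t * Q i j ^ (1 - t)) p.1 p.2) ^ (2 : ℝ) =
          ((P p.1 p.2) ^ (2 : ℝ)) ^ t * ((Q p.1 p.2) ^ (2 : ℝ)) ^ (1 - t) := fun p =>
      rpow_geom_comm (hP p.1 p.2) (hQ p.1 p.2) t 2
    refine le_trans (le_of_eq (Finset.sum_congr rfl fun p _ => he p)) ?_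
    exact holder Finset.univ (fun p : Fin n × Fin n => (P p.1 p.2) ^ (2 : ℝ))
      (fun p : Fin n × Fin n => (Q p.1 p.2) ^ (2 : ℝ))
      (fun p => Real.rpow_nonneg (hP p.1 p.2) 2)
      (fun p => Real.rpow_nonneg (hQ p.1 p.2) 2) ht0 ht1
  have step2 : (∑ p : Fin n × Fin n,
      ((Matrix.of fun i j => P i j ^ t * Q i j ^ (1 - t)) p.1 p.2) ^ (2 : ℝ)) ^ (1 / 2 : ℝ) ≤
      (X ^ t * Y ^ (1 - t)) ^ (1 / 2 : ℝ) :=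
    Real.rpow_le_rpow (Finset.sum_nonneg fun p _ => Real.rpow_nonneg (hD p.1 p.2) 2)
      step1 (by norm_num)
  calc _ ≤ (X ^ t * Y ^ (1 - t)) ^ (1 / 2 : ℝ) := step2
    _ = (X ^ (1 / 2 : ℝ)) ^ t * (Y ^ (1 / 2 : ℝ)) ^ (1 - t) := rpow_geom_comm hX0 hY0 t _

/-- Kingman's inequality: log-convexity of the spectral radius under Hadamard
weighted geometric means. -/
lemma kingman {A B : Matrix (Fin n) (Fin n) ℝ} (hA : ∀ i j, 0 ≤ A i j)
    (hB : ∀ i j, 0 ≤ B i j) {t : ℝ} (ht0 : 0 < t) (ht1 : t < 1) :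
    specRad (Matrix.of fun i j => A i j ^ t * B i j ^ (1 - t)) ≤
      specRad A ^ t * specRad B ^ (1 - t) := by
  have h1t : 0 < 1 - t := by linarith
  set C : Matrix (Fin n) (Fin n) ℝ := Matrix.of fun i j => A i j ^ t * B i j ^ (1 - t) with hC
  have hCn : ∀ i j, 0 ≤ C i j := fun i j =>
    mul_nonneg (Real.rpow_nonneg (hA i j) t) (Real.rpow_nonneg (hB i j) _)
  have h1 := tendsto_fn_pow C
  have h2 : Tendsto (fun k : ℕ => (fn (A ^ k) ^ (1 / (k : ℝ))) ^ t *
      (fn (B ^ k) ^ (1 / (k : ℝ))) ^ (1 - t)) atTop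
      (𝓝 (specRad A ^ t * specRad B ^ (1 - t))) :=
    ((tendsto_fn_pow A).rpow_const (Or.inr ht0.le)).mul
      ((tendsto_fn_pow B).rpow_const (Or.inr h1t.le))
  refine le_of_tendsto_of_tendsto' h1 h2 fun k => ?_
  have hk : (0 : ℝ) ≤ 1 / (k : ℝ) := by positivity
  have hmid : fn (C ^ k) ≤ fn (A ^ k) ^ t * fn (B ^ k) ^ (1 - t) := by
    have hstep : fn (C ^ k) ≤
        fn (Matrix.of fun i j => ((A ^ k) i j) ^ t * ((B ^ k) i j) ^ (1 - t)) :=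
      fn_le_fn (pow_entry_nonneg hCn k) (pow_entry_le hA hB ht0 ht1 k)
    exact hstep.trans (fn_holder (pow_entry_nonneg hA k) (pow_entry_nonneg hB k) ht0 ht1)
  calc fn (C ^ k) ^ (1 / (k : ℝ))
      ≤ (fn (A ^ k) ^ t * fn (B ^ k) ^ (1 - t)) ^ (1 / (k : ℝ)) :=
        Real.rpow_le_rpow (fn_nonneg _) hmid hk
    _ = (fn (A ^ k) ^ (1 / (k : ℝ))) ^ t * (fn (B ^ k) ^ (1 / (k : ℝ))) ^ (1 - t) :=
        rpow_geom_comm (fn_nonneg _) (fn_nonneg _) t _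

lemma spectrum_transpose (X : Matrix (Fin n) (Fin n) ℂ) :
    spectrum ℂ Xᵀ = spectrum ℂ X := by
  ext z
  rw [spectrum.mem_iff, spectrum.mem_iff, not_iff_not]
  have h : algebraMap ℂ (Matrix (Fin n) (Fin n) ℂ) z - Xᵀ =
      (algebraMap ℂ (Matrix (Fin n) (Fin n) ℂ) z - X)ᵀ := by
    rw [Matrix.transpose_sub, Matrix.algebraMap_eq_diagonal, Matrix.diagonal_transpose]
  rw [h, Matrix.isUnit_iff_isUnit_det, Matrix.det_transpose, ← Matrix.isUnit_iff_isUnit_det]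

lemma specRad_transpose (M : Matrix (Fin n) (Fin n) ℝ) : specRad Mᵀ = specRad M := by
  unfold specRad
  congr 1
  rw [Matrix.transpose_map, spectralRadius, spectralRadius, spectrum_transpose]

lemma wgs_nonneg {A : Matrix (Fin n) (Fin n) ℝ} (hA : ∀ i j, 0 ≤ A i j) (α : ℝ) :
    ∀ i j, 0 ≤ wgs α A i j := fun i j =>
  mul_nonneg (Real.rpow_nonneg (hA i j) α) (Real.rpow_nonneg (hA j i) _)

lemma wgs_transpose (A : Matrix (Fin n) (Fin n) ℝ) (α : ℝ) :
    (wgs α A)ᵀ = wgs (1 - α) A := by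
  ext i j
  show wgs α A j i = wgs (1 - α) A i j
  show A j i ^ α * A i j ^ (1 - α) = A i j ^ (1 - α) * A j i ^ (1 - (1 - α))
  rw [sub_sub_cancel, mul_comm]

lemma specRad_wgs_symm (A : Matrix (Fin n) (Fin n) ℝ) (α : ℝ) :
    specRad (wgs (1 - α) A) = specRad (wgs α A) := by
  rw [← wgs_transpose, specRad_transpose]

lemma wgs_combo {A : Matrix (Fin n) (Fin n) ℝ} (hA : ∀ i j, 0 ≤ A i j)
    {a b t : ℝ} (ha0 : 0 ≤ a) (ha1 : a ≤ 1) (hb0 : 0 ≤ b) (hb1 : b ≤ 1)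
    (ht0 : 0 ≤ t) (ht1 : t ≤ 1) :
    wgs (t * a + (1 - t) * b) A =
      Matrix.of fun i j => (wgs a A i j) ^ t * (wgs b A i j) ^ (1 - t) := by
  ext i j
  show A i j ^ (t * a + (1 - t) * b) * A j i ^ (1 - (t * a + (1 - t) * b)) =
    (A i j ^ a * A j i ^ (1 - a)) ^ t * (A i j ^ b * A j i ^ (1 - b)) ^ (1 - t)
  set x := A i j with hx'
  set y := A j i with hy'
  have hx := hA i j
  have hy := hA j i
  rw [Real.mul_rpow (Real.rpow_nonneg hx a) (Real.rpow_nonneg hy _),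
    Real.mul_rpow (Real.rpow_nonneg hx b) (Real.rpow_nonneg hy _),
    ← Real.rpow_mul hx, ← Real.rpow_mul hy, ← Real.rpow_mul hx, ← Real.rpow_mul hy]
  have hrearr : x ^ (a * t) * y ^ ((1 - a) * t) * (x ^ (b * (1 - t)) * y ^ ((1 - b) * (1 - t))) =
      (x ^ (a * t) * x ^ (b * (1 - t))) * (y ^ ((1 - a) * t) * y ^ ((1 - b) * (1 - t))) := by
    ring
  rw [hrearr, ← Real.rpow_add_of_nonneg hx (mul_nonneg ha0 ht0)
      (mul_nonneg hb0 (by linarith)),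
    ← Real.rpow_add_of_nonneg hy (mul_nonneg (by linarith) ht0)
      (mul_nonneg (by linarith) (by linarith)),
    show a * t + b * (1 - t) = t * a + (1 - t) * b by ring,
    show (1 - a) * t + (1 - b) * (1 - t) = 1 - (t * a + (1 - t) * b) by ring]

/-- The key convexity estimate: if `c = t·a + (1-t)·(1-a)` with `t ∈ (0,1)` then
`r(S_c) ≤ r(S_a)`. -/
lemma key (A : Matrix (Fin n) (Fin n) ℝ) (hA : ∀ i j, 0 ≤ A i j)
    {a c t : ℝ} (ha0 : 0 ≤ a) (ha1 : a ≤ 1) (ht0 : 0 < t) (ht1 : t < 1)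
    (hc : c = t * a + (1 - t) * (1 - a)) :
    specRad (wgs c A) ≤ specRad (wgs a A) := by
  have h1a0 : (0 : ℝ) ≤ 1 - a := by linarith
  have h1a1 : 1 - a ≤ 1 := by linarith
  rw [hc, wgs_combo hA ha0 ha1 h1a0 h1a1 ht0.le ht1.le]
  refine (kingman (wgs_nonneg hA a) (wgs_nonneg hA (1 - a)) ht0 ht1).trans ?_
  rw [specRad_wgs_symm]
  have h0 : 0 ≤ specRad (wgs a A) := specRad_nonneg _
  have e : t + (1 - t) = 1 := by ring
  rw [← Real.rpow_add_of_nonneg h0 ht0.le (by linarith), e, Real.rpow_one]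

end SpecRadAux

/-- `α ↦ r(S_α(A))` is decreasing on `[0, 1/2]` and increasing on `[1/2, 1]`;
in particular `r(S_α(A)) ≥ r(S_{1/2}(A))` for all `α ∈ [0,1]`. -/
theorem specRad_wgs_monotonicity {n : ℕ} (A : Matrix (Fin n) (Fin n) ℝ)
    (hA : ∀ i j, 0 ≤ A i j) :
    (∀ a b : ℝ, 0 ≤ a → a ≤ b → b ≤ 1 / 2 → specRad (wgs b A) ≤ specRad (wgs a A)) ∧
    (∀ a b : ℝ, 1 / 2 ≤ a → a ≤ b → b ≤ 1 → specRad (wgs a A) ≤ specRad (wgs b A)) ∧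
    (∀ α : ℝ, 0 ≤ α → α ≤ 1 → specRad (wgs (1 / 2) A) ≤ specRad (wgs α A)) := by
  have part1 : ∀ a b : ℝ, 0 ≤ a → a ≤ b → b ≤ 1 / 2 →
      specRad (wgs b A) ≤ specRad (wgs a A) := by
    intro a b ha hab hb
    rcases eq_or_lt_of_le hab with rfl | hlt
    · exact le_refl _
    · have h2a : (0 : ℝ) < 1 - 2 * a := by linarith
      set t : ℝ := (1 - a - b) / (1 - 2 * a) with ht
      have ht0 : 0 < t := div_pos (by linarith) h2a
      have ht1 : t < 1 := (div_lt_one h2a).mpr (by linarith)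
      refine SpecRadAux.key A hA ha (by linarith) ht0 ht1 ?_
      have h : t * (1 - 2 * a) = 1 - a - b := by rw [ht]; exact div_mul_cancel₀ _ h2a.ne'
      linear_combination h
  refine ⟨part1, ?_, ?_⟩
  · intro a b ha hab hb
    have h := part1 (1 - b) (1 - a) (by linarith) (by linarith) (by linarith)
    rwa [SpecRadAux.specRad_wgs_symm, SpecRadAux.specRad_wgs_symm] at h
  · intro α h0 h1
    exact SpecRadAux.key A hA h0 h1 (t := 1 / 2) (by norm_num) (by norm_num) (by ring)
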